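/- arXiv:1808.00268 — 3 statements merged into one kernel-verified Lean document; each statement's English description precedes it below -/
import Mathlib

section
/- For every a > 0, b ≥ 0 and σ² > 0, the function τ ↦ (1 − τ) log₂(1 + a/(σ²(1 − τ) + b)) is concave on [0, 1). -/
set_option maxHeartbeats 1000000 in
private lemma lcd_aux (a b σ2 : ℝ) (ha : 0 < a) (hb : 0 ≤ b) (hσ2 : 0 < σ2) :
    ConcaveOn ℝ (Set.Ico (0 : ℝ) 1)
      (fun τ => (1 - τ) * (Real.log (σ2 * (1 - τ) + b + a) - Real.log (σ2 * (1 - τ) + b))) := by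
  have hBpos : ∀ τ : ℝ, τ < 1 → 0 < σ2 * (1 - τ) + b := fun τ hτ => by
    have : 0 < 1 - τ := by linarith
    positivity
  have hApos : ∀ τ : ℝ, τ < 1 → 0 < σ2 * (1 - τ) + b + a := fun τ hτ => by
    have := hBpos τ hτ; linarith
  have hdB : ∀ τ : ℝ, HasDerivAt (fun x => σ2 * (1 - x) + b) (-σ2) τ := fun τ => by
    simpa using (((hasDerivAt_id τ).const_sub 1).const_mul σ2).add_const b
  have hdA : ∀ τ : ℝ, HasDerivAt (fun x => σ2 * (1 - x) + b + a) (-σ2) τ :=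
    fun τ => (hdB τ).add_const a
  have hone : ∀ τ : ℝ, HasDerivAt (fun x : ℝ => 1 - x) (-1) τ := fun τ => by
    simpa using (hasDerivAt_id τ).const_sub 1
  refine concaveOn_of_hasDerivWithinAt2_nonpos
    (f' := fun τ => -(Real.log (σ2 * (1 - τ) + b + a) - Real.log (σ2 * (1 - τ) + b))
      + (1 - τ) * (σ2 / (σ2 * (1 - τ) + b) - σ2 / (σ2 * (1 - τ) + b + a)))
    (f'' := fun τ => 2 * (σ2 / (σ2 * (1 - τ) + b + a) - σ2 / (σ2 * (1 - τ) + b))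
      + (1 - τ) * (σ2 ^ 2 / (σ2 * (1 - τ) + b) ^ 2 - σ2 ^ 2 / (σ2 * (1 - τ) + b + a) ^ 2))
    (convex_Ico 0 1) ?_ ?_ ?_ ?_
  · refine ContinuousOn.mul (by fun_prop) (ContinuousOn.sub ?_ ?_)
    · exact ContinuousOn.log (by fun_prop) (fun x hx => (hApos x hx.2).ne')
    · exact ContinuousOn.log (by fun_prop) (fun x hx => (hBpos x hx.2).ne')
  · intro x hx
    rw [interior_Ico] at hx
    have hτ := hx.2
    have h := (hone x).mul (((hdA x).log (hApos x hτ).ne').sub ((hdB x).log (hBpos x hτ).ne'))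
    refine (HasDerivAt.hasDerivWithinAt ?_)
    refine HasDerivAt.congr_deriv h ?_
    simp only [Pi.sub_apply]
    have hBne := (hBpos x hτ).ne'
    have hAne := (hApos x hτ).ne'
    field_simp
    ring
  · intro x hx
    rw [interior_Ico] at hx
    have hτ := hx.2
    have hBne := (hBpos x hτ).ne'
    have hAne := (hApos x hτ).ne'
    have hiB : HasDerivAt (fun x => σ2 / (σ2 * (1 - x) + b)) (σ2 * σ2 / (σ2 * (1 - x) + b) ^ 2) x := by
      have := ((hdB x).inv hBne).const_mul σ2
      simp only [div_eq_mul_inv]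
      refine HasDerivAt.congr_deriv this ?_
      field_simp
    have hiA : HasDerivAt (fun x => σ2 / (σ2 * (1 - x) + b + a))
        (σ2 * σ2 / (σ2 * (1 - x) + b + a) ^ 2) x := by
      have := ((hdA x).inv hAne).const_mul σ2
      simp only [div_eq_mul_inv]
      refine HasDerivAt.congr_deriv this ?_
      field_simp
    have h := ((((hdA x).log hAne).sub ((hdB x).log hBne)).neg).add ((hone x).mul (hiB.sub hiA))
    refine (HasDerivAt.hasDerivWithinAt ?_)
    refine HasDerivAt.congr_deriv h ?_
    simp only [Pi.sub_apply]
    field_simp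
    ring
  · intro x hx
    rw [interior_Ico] at hx
    obtain ⟨hx0, hx1⟩ := hx
    have hBp := hBpos x hx1
    have hAp := hApos x hx1
    have ht : 0 < 1 - x := by linarith
    set Bv := σ2 * (1 - x) + b with hBv
    set Av := σ2 * (1 - x) + b + a with hAv
    have hAB : Bv + a = Av := by rw [hBv, hAv]
    have hσB : σ2 * (1 - x) ≤ Bv := by rw [hBv]; linarith
    have key : 2 * (σ2 * Bv - σ2 * Av) * (Bv ^ 2 * Av ^ 2)
        + (1 - x) * (σ2 ^ 2 * Av ^ 2 - σ2 ^ 2 * Bv ^ 2) * (Av * Bv) ≤ 0 := by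
      have hfact : 2 * (σ2 * Bv - σ2 * Av) * (Bv ^ 2 * Av ^ 2)
          + (1 - x) * (σ2 ^ 2 * Av ^ 2 - σ2 ^ 2 * Bv ^ 2) * (Av * Bv)
          = σ2 * a * (Av * Bv) * (σ2 * (1 - x) * (Av + Bv) - 2 * (Av * Bv)) := by
        rw [← hAB]; ring
      rw [hfact]
      have h1 : σ2 * (1 - x) * (Av + Bv) ≤ Bv * (Av + Bv) :=
        mul_le_mul_of_nonneg_right hσB (by positivity)
      have h3 : σ2 * (1 - x) * (Av + Bv) - 2 * (Av * Bv) ≤ 0 := by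
        nlinarith [mul_pos ha hBp]
      exact mul_nonpos_of_nonneg_of_nonpos (by positivity) h3
    have e : 2 * (σ2 / Av - σ2 / Bv) + (1 - x) * (σ2 ^ 2 / Bv ^ 2 - σ2 ^ 2 / Av ^ 2)
        = (2 * (σ2 * Bv - σ2 * Av) * (Bv ^ 2 * Av ^ 2)
          + (1 - x) * (σ2 ^ 2 * Av ^ 2 - σ2 ^ 2 * Bv ^ 2) * (Av * Bv))
          / (Bv ^ 2 * Av ^ 2 * (Av * Bv)) := by
      field_simp
    show 2 * (σ2 / Av - σ2 / Bv) + (1 - x) * (σ2 ^ 2 / Bv ^ 2 - σ2 ^ 2 / Av ^ 2) ≤ 0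
    rw [e]
    exact div_nonpos_of_nonpos_of_nonneg key (by positivity)

set_option maxHeartbeats 1000000 in
/-- For every `a > 0`, `b ≥ 0` and `σ² > 0`, the function
`τ ↦ (1 - τ) log₂(1 + a / (σ² (1 - τ) + b))` is concave on `[0, 1)`. -/
theorem lcd_user_throughput_concave_in_tau
    (a b σ2 : ℝ) (ha : 0 < a) (hb : 0 ≤ b) (hσ2 : 0 < σ2) :
    ConcaveOn ℝ (Set.Ico (0 : ℝ) 1)
      (fun τ => (1 - τ) * Real.logb 2 (1 + a / (σ2 * (1 - τ) + b))) := by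
  have hgconc := lcd_aux a b σ2 ha hb hσ2
  have heq : Set.EqOn
      (fun τ => (Real.log 2)⁻¹ •
        ((1 - τ) * (Real.log (σ2 * (1 - τ) + b + a) - Real.log (σ2 * (1 - τ) + b))))
      (fun τ => (1 - τ) * Real.logb 2 (1 + a / (σ2 * (1 - τ) + b))) (Set.Ico (0:ℝ) 1) := by
    intro x hx
    have hx1 : x < 1 := hx.2
    have hBp : 0 < σ2 * (1 - x) + b := by
      have : 0 < 1 - x := by linarith
      positivity
    have hAp : 0 < σ2 * (1 - x) + b + a := by linarith
    have h1 : 1 + a / (σ2 * (1 - x) + b) = (σ2 * (1 - x) + b + a) / (σ2 * (1 - x) + b) := by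
      field_simp
    simp only [smul_eq_mul, h1, Real.logb, Real.log_div hAp.ne' hBp.ne']
    ring
  exact (hgconc.smul (by positivity : (0:ℝ) ≤ (Real.log 2)⁻¹)).congr heq
end

section
/- Fix K ≥ 1, σ² > 0, channel gains g_i ≥ 0 and energies E_i ≥ 0 with g_i E_i > 0 for each i. The LCD sum throughput τ ↦ ∑_{i=1}^{K} (1 − τ) log₂(1 + g_i E_i/(σ²(1 − τ) + ∑_{j≠i} g_j E_j)) is a concave function of τ on [0, 1). -/
open Real Set

private lemma concaveOn_sum_aux {ι : Type*} (s : Set ℝ) (hs : Convex ℝ s) (t : Finset ι)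
    (f : ι → ℝ → ℝ) (h : ∀ i ∈ t, ConcaveOn ℝ s (f i)) :
    ConcaveOn ℝ s (fun x => ∑ i ∈ t, f i x) := by
  classical
  induction t using Finset.induction_on with
  | empty => simpa using concaveOn_const 0 hs
  | insert _ _ hi ih =>
    simp only [Finset.sum_insert hi]
    exact (h _ (Finset.mem_insert_self _ _)).add
      (ih fun i hit => h i (Finset.mem_insert_of_mem hit))

private lemma concave_log_term (σ2 a b : ℝ) (hσ2 : 0 < σ2) (ha : 0 < a) (hb : 0 ≤ b) :
    ConcaveOn ℝ (Set.Ico (0 : ℝ) 1)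
      (fun τ => (1 - τ) * (Real.log (σ2 * (1 - τ) + (b + a)) - Real.log (σ2 * (1 - τ) + b))) := by
  have hint : interior (Set.Ico (0 : ℝ) 1) = Set.Ioo (0 : ℝ) 1 := interior_Ico
  set f' : ℝ → ℝ := fun τ =>
    (-1) * (Real.log (σ2 * (1 - τ) + (b + a)) - Real.log (σ2 * (1 - τ) + b)) +
      (1 - τ) * (-σ2 / (σ2 * (1 - τ) + (b + a)) + σ2 / (σ2 * (1 - τ) + b)) with hf'def
  set f'' : ℝ → ℝ := fun τ =>
    2 * σ2 * (1 / (σ2 * (1 - τ) + (b + a)) - 1 / (σ2 * (1 - τ) + b)) +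
      (1 - τ) * σ2 ^ 2 * (1 / (σ2 * (1 - τ) + b) ^ 2 - 1 / (σ2 * (1 - τ) + (b + a)) ^ 2)
    with hf''def
  have hBpos : ∀ x ∈ Set.Ico (0 : ℝ) 1, 0 < σ2 * (1 - x) + b := by
    intro x hx
    have : 0 < 1 - x := by linarith [hx.2]
    positivity
  have hApos : ∀ x ∈ Set.Ico (0 : ℝ) 1, 0 < σ2 * (1 - x) + (b + a) := by
    intro x hx
    have : 0 < 1 - x := by linarith [hx.2]
    positivity
  have hABderiv : ∀ c : ℝ, ∀ x : ℝ, HasDerivAt (fun τ => σ2 * (1 - τ) + c) (-σ2) x := by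
    intro c x
    have h1 : HasDerivAt (fun τ : ℝ => 1 - τ) (-1) x :=
      by simpa using (hasDerivAt_id' x).const_sub (1 : ℝ)
    have := (h1.const_mul σ2).add_const c
    simpa using this
  apply concaveOn_of_hasDerivWithinAt2_nonpos (f' := f') (f'' := f'') (convex_Ico 0 1)
  · -- continuity
    apply ContinuousOn.mul (by fun_prop)
    apply ContinuousOn.sub
    · exact ContinuousOn.log (by fun_prop) fun x hx => (hApos x hx).ne'
    · exact ContinuousOn.log (by fun_prop) fun x hx => (hBpos x hx).ne'
  · -- first derivative
    intro x hx
    rw [hint] at hx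
    have hxI : x ∈ Set.Ico (0 : ℝ) 1 := ⟨hx.1.le, hx.2⟩
    have hA := hApos x hxI
    have hB := hBpos x hxI
    have hlogA : HasDerivAt (fun τ => Real.log (σ2 * (1 - τ) + (b + a)))
        (-σ2 / (σ2 * (1 - x) + (b + a))) x := (hABderiv (b + a) x).log hA.ne'
    have hlogB : HasDerivAt (fun τ => Real.log (σ2 * (1 - τ) + b))
        (-σ2 / (σ2 * (1 - x) + b)) x := (hABderiv b x).log hB.ne'
    have h1 : HasDerivAt (fun τ : ℝ => 1 - τ) (-1) x :=
      by simpa using (hasDerivAt_id' x).const_sub (1 : ℝ)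
    have := h1.fun_mul (hlogA.fun_sub hlogB)
    refine HasDerivAt.hasDerivWithinAt ?_
    convert this using 1
    · rfl
    simp only [hf'def]
    ring
  · -- second derivative
    intro x hx
    rw [hint] at hx
    have hxI : x ∈ Set.Ico (0 : ℝ) 1 := ⟨hx.1.le, hx.2⟩
    have hA := hApos x hxI
    have hB := hBpos x hxI
    have hlogA : HasDerivAt (fun τ => Real.log (σ2 * (1 - τ) + (b + a)))
        (-σ2 / (σ2 * (1 - x) + (b + a))) x := (hABderiv (b + a) x).log hA.ne'
    have hlogB : HasDerivAt (fun τ => Real.log (σ2 * (1 - τ) + b))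
        (-σ2 / (σ2 * (1 - x) + b)) x := (hABderiv b x).log hB.ne'
    have h1 : HasDerivAt (fun τ : ℝ => 1 - τ) (-1) x :=
      by simpa using (hasDerivAt_id' x).const_sub (1 : ℝ)
    -- derivative of σ2 / A and σ2 / B terms
    have hinvA : HasDerivAt (fun τ => -σ2 / (σ2 * (1 - τ) + (b + a)))
        ((0 * (σ2 * (1 - x) + (b + a)) - (-σ2) * (-σ2)) / (σ2 * (1 - x) + (b + a)) ^ 2) x :=
      (hasDerivAt_const x (-σ2)).div (hABderiv (b + a) x) hA.ne'
    have hinvB : HasDerivAt (fun τ => σ2 / (σ2 * (1 - τ) + b))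
        ((0 * (σ2 * (1 - x) + b) - σ2 * (-σ2)) / (σ2 * (1 - x) + b) ^ 2) x :=
      (hasDerivAt_const x σ2).div (hABderiv b x) hB.ne'
    have hmain := ((hlogA.fun_sub hlogB).const_mul (-1 : ℝ)).fun_add (h1.fun_mul (hinvA.fun_add hinvB))
    refine HasDerivAt.hasDerivWithinAt ?_
    convert hmain using 1
    simp only [hf''def]
    field_simp
    ring
  · -- nonpositivity of second derivative
    intro x hx
    rw [hint] at hx
    have hxI : x ∈ Set.Ico (0 : ℝ) 1 := ⟨hx.1.le, hx.2⟩
    have hA := hApos x hxI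
    have hB := hBpos x hxI
    set u : ℝ := 1 - x with hu
    have hu0 : 0 < u := by simp only [hu]; linarith [hx.2]
    set P : ℝ := σ2 * u + b with hP
    set Q : ℝ := σ2 * u + (b + a) with hQ
    have key : f'' x = σ2 / (P ^ 2 * Q ^ 2) *
        ((Q - P) * (P * (σ2 * u - Q) + Q * (σ2 * u - P))) := by
      simp only [hf''def, ← hu, ← hP, ← hQ]
      field_simp
      ring
    rw [key]
    apply mul_nonpos_of_nonneg_of_nonpos
    · positivity
    · apply mul_nonpos_of_nonneg_of_nonpos
      · simp only [hP, hQ]; linarith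
      · have h1 : σ2 * u - Q = -(b + a) := by simp [hQ]
        have h2 : σ2 * u - P = -b := by simp [hP]
        rw [h1, h2]
        nlinarith [hB, hA, hb, ha.le]

/-- Fix `K ≥ 1`, `σ² > 0`, channel gains `g i ≥ 0` and energies
`E i ≥ 0` with `g i * E i > 0` for each `i`. The LCD sum throughput
`τ ↦ ∑_i (1 - τ) log₂(1 + g i E i / (σ² (1 - τ) + ∑_{j ≠ i} g j E j))`
is concave on `[0, 1)`. -/
theorem lcd_sum_throughput_concave_in_tau (K : ℕ) (hK : 1 ≤ K)
    (σ2 : ℝ) (hσ2 : 0 < σ2) (g E : Fin K → ℝ)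
    (hg : ∀ i, 0 ≤ g i) (hE : ∀ i, 0 ≤ E i) (hgE : ∀ i, 0 < g i * E i) :
    ConcaveOn ℝ (Set.Ico (0 : ℝ) 1)
      (fun τ =>
        ∑ i : Fin K,
          (1 - τ) *
            Real.logb 2
              (1 + g i * E i /
                (σ2 * (1 - τ) +
                  ∑ j ∈ Finset.univ.filter (fun j => j ≠ i), g j * E j))) := by
  apply concaveOn_sum_aux _ (convex_Ico 0 1)
  intro i _
  set a : ℝ := g i * E i with hadef
  set b : ℝ := ∑ j ∈ Finset.univ.filter (fun j => j ≠ i), g j * E j with hbdef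
  have ha : 0 < a := hgE i
  have hb : 0 ≤ b := Finset.sum_nonneg fun j _ => mul_nonneg (hg j) (hE j)
  have hconc := concave_log_term σ2 a b hσ2 ha hb
  have hsmul := hconc.smul (c := (Real.log 2)⁻¹)
    (by positivity)
  apply hsmul.congr
  intro τ hτ
  have h1τ : 0 < 1 - τ := by linarith [hτ.2]
  have hB : 0 < σ2 * (1 - τ) + b := by positivity
  have hA : 0 < σ2 * (1 - τ) + (b + a) := by positivity
  have heq : 1 + a / (σ2 * (1 - τ) + b) =
      (σ2 * (1 - τ) + (b + a)) / (σ2 * (1 - τ) + b) := by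
    field_simp
    ring
  simp only [Pi.smul_apply, smul_eq_mul, Real.logb, heq, Real.log_div hA.ne' hB.ne']
  ring
end

section
/- Let N > 0 and a ≥ b ≥ 0. Then min( log₂(1 + a/(N + b)), log₂(1 + b/N) ) ≥ min( log₂(1 + a/N), log₂(1 + b/(N + a)) ); that is, with two users under SICD, decoding the stronger received signal first yields a minimum user rate at least as large as decoding the weaker signal first. -/
/-- Let `N > 0` and `a ≥ b ≥ 0`. Then with two users under SICD,
decoding the stronger received signal first yields a minimum user rate at
least as large as decoding the weaker signal first. -/
theorem strongest_first_maximizes_min_rate (N a b : ℝ)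
    (hN : 0 < N) (hba : b ≤ a) (hb : 0 ≤ b) :
    min (Real.logb 2 (1 + a / N)) (Real.logb 2 (1 + b / (N + a))) ≤
      min (Real.logb 2 (1 + a / (N + b))) (Real.logb 2 (1 + b / N)) := by
  have ha : 0 ≤ a := hb.trans hba
  have hNa : 0 < N + a := by linarith
  have hNb : 0 < N + b := by linarith
  have key : Real.logb 2 (1 + b / (N + a)) ≤
      min (Real.logb 2 (1 + a / (N + b))) (Real.logb 2 (1 + b / N)) := by
    have h1 : b / (N + a) ≤ a / (N + b) := by
      rw [div_le_div_iff₀ hNa hNb]; nlinarith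
    have h2 : b / (N + a) ≤ b / N := by
      apply div_le_div_of_nonneg_left hb hN; linarith
    have hpos : (0:ℝ) < 1 + b / (N + a) := by positivity
    refine le_min ?_ ?_
    · exact Real.logb_le_logb_of_le one_lt_two hpos (by linarith)
    · exact Real.logb_le_logb_of_le one_lt_two hpos (by linarith)
  exact le_trans (min_le_right _ _) key
end
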